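/- Let p ≥ 2, q = p/(p−1), δ = q(q−1)/8 and n ∈ ℕ. The Nazarov–Treil Bellman function Q(ζ,η) = (1/2)β(|ζ|,|η|) is twice continuously differentiable on the open set {(ζ,η) ∈ ℝ × ℝⁿ : η ≠ 0 and |ζ|^p ≠ |η|^q}. -/

import Mathlib

open Real Filter

section aux

variable {p : ℝ}

private lemma bellAux_hasDerivAt_abs_rpow (hp : 1 < p) (x : ℝ) :
    HasDerivAt (fun y : ℝ => |y| ^ p) (p * x * |x| ^ (p - 2)) x := by
  rcases lt_trichotomy x 0 with hx | hx | hx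
  · have hev : (fun y : ℝ => |y| ^ p) =ᶠ[nhds x] fun y => (-y) ^ p := by
      filter_upwards [eventually_lt_nhds hx] with y hy
      rw [abs_of_neg hy]
    have h1 : HasDerivAt (fun y : ℝ => (-y) ^ p) (p * (-x) ^ (p - 1) * (-1)) x :=
      (Real.hasDerivAt_rpow_const (p := p) (Or.inl (neg_ne_zero.mpr hx.ne))).comp x
        (hasDerivAt_neg x)
    have heq : p * (-x) ^ (p - 1) * (-1) = p * x * |x| ^ (p - 2) := by
      rw [abs_of_neg hx, show p - 1 = 1 + (p - 2) by ring,
        Real.rpow_add (by linarith : (0:ℝ) < -x), Real.rpow_one]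
      ring
    exact (heq ▸ h1).congr_of_eventuallyEq hev
  · subst hx
    rw [show p * 0 * |(0:ℝ)| ^ (p - 2) = 0 by ring]
    rw [hasDerivAt_iff_tendsto]
    have hbound : ∀ y : ℝ,
        ‖‖y - 0‖⁻¹ * ‖|y| ^ p - |(0:ℝ)| ^ p - (y - 0) • (0:ℝ)‖‖ ≤ |y| ^ (p - 1) := by
      intro y
      rcases eq_or_ne y 0 with rfl | hy
      · simp [Real.zero_rpow (by linarith : p - 1 ≠ 0)]
      · have hay : (0:ℝ) < |y| := abs_pos.2 hy
        rw [abs_zero, Real.zero_rpow (by linarith : p ≠ 0)]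
        simp only [sub_zero, smul_zero, Real.norm_eq_abs]
        rw [abs_of_nonneg (Real.rpow_nonneg (abs_nonneg y) p),
          abs_of_nonneg (by positivity), Real.rpow_sub hay, Real.rpow_one,
          div_eq_inv_mul]
    have htend : Tendsto (fun y : ℝ => |y| ^ (p - 1)) (nhds 0) (nhds 0) := by
      have := ((Real.continuousAt_rpow_const |(0:ℝ)| (p - 1)
        (Or.inr (by linarith))).comp continuous_abs.continuousAt (x := (0:ℝ)))
      simpa [Function.comp_def, Real.zero_rpow (by linarith : p - 1 ≠ 0)] using this.tendsto
    exact squeeze_zero_norm hbound htend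
  · have hev : (fun y : ℝ => |y| ^ p) =ᶠ[nhds x] fun y => y ^ p := by
      filter_upwards [eventually_gt_nhds hx] with y hy
      rw [abs_of_pos hy]
    have h1 : HasDerivAt (fun y : ℝ => y ^ p) (p * x ^ (p - 1)) x :=
      Real.hasDerivAt_rpow_const (Or.inl hx.ne')
    have heq : p * x ^ (p - 1) = p * x * |x| ^ (p - 2) := by
      rw [abs_of_pos hx, show p - 1 = 1 + (p - 2) by ring,
        Real.rpow_add hx, Real.rpow_one]
      ring
    exact (heq ▸ h1).congr_of_eventuallyEq hev

private lemma bellAux_hasDerivAt_abs_rpow' (hp : 2 < p) (x : ℝ) :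
    HasDerivAt (fun y : ℝ => p * y * |y| ^ (p - 2))
      (p * (p - 1) * |x| ^ (p - 2)) x := by
  rcases lt_trichotomy x 0 with hx | hx | hx
  · have hev : (fun y : ℝ => p * y * |y| ^ (p - 2)) =ᶠ[nhds x]
        fun y => -p * (-y) ^ (p - 1) := by
      filter_upwards [eventually_lt_nhds hx] with y hy
      rw [abs_of_neg hy, show p - 1 = 1 + (p - 2) by ring,
        Real.rpow_add (by linarith : (0:ℝ) < -y), Real.rpow_one]
      ring
    have h1 : HasDerivAt (fun y : ℝ => -p * (-y) ^ (p - 1))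
        (-p * ((p - 1) * (-x) ^ (p - 1 - 1) * (-1))) x :=
      (((Real.hasDerivAt_rpow_const (p := p - 1)
        (Or.inl (neg_ne_zero.mpr hx.ne))).comp x (hasDerivAt_neg x))).const_mul (-p)
    have heq : -p * ((p - 1) * (-x) ^ (p - 1 - 1) * (-1)) = p * (p - 1) * |x| ^ (p - 2) := by
      rw [abs_of_neg hx, show p - 1 - 1 = p - 2 by ring]
      ring
    exact (heq ▸ h1).congr_of_eventuallyEq hev
  · subst hx
    rw [show p * (p - 1) * |(0:ℝ)| ^ (p - 2) = 0 by
      rw [abs_zero, Real.zero_rpow (by linarith : p - 2 ≠ 0)]; ring]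
    rw [hasDerivAt_iff_tendsto]
    have hbound : ∀ y : ℝ,
        ‖‖y - 0‖⁻¹ * ‖p * y * |y| ^ (p - 2) - p * 0 * |(0:ℝ)| ^ (p - 2) -
          (y - 0) • (0:ℝ)‖‖ ≤ p * |y| ^ (p - 2) := by
      intro y
      rcases eq_or_ne y 0 with rfl | hy
      · simp [Real.zero_rpow (by linarith : p - 2 ≠ 0)]
      · have hay : (0:ℝ) < |y| := abs_pos.2 hy
        have hp0 : (0:ℝ) < p := by linarith
        simp only [sub_zero, smul_zero, mul_zero, zero_mul, Real.norm_eq_abs]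
        rw [abs_of_nonneg (by positivity : (0:ℝ) ≤ |y|⁻¹ * |p * y * |y| ^ (p - 2)|),
          abs_mul, abs_mul, abs_of_pos hp0,
          abs_of_nonneg (Real.rpow_nonneg (abs_nonneg y) _)]
        rw [show |y|⁻¹ * (p * |y| * |y| ^ (p - 2)) = p * |y| ^ (p - 2) * (|y|⁻¹ * |y|) by
          ring, inv_mul_cancel₀ hay.ne', mul_one]
    have htend : Tendsto (fun y : ℝ => p * |y| ^ (p - 2)) (nhds 0) (nhds 0) := by
      have := ((Real.continuousAt_rpow_const |(0:ℝ)| (p - 2)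
        (Or.inr (by linarith))).comp continuous_abs.continuousAt (x := (0:ℝ)))
      have h2 := (this.tendsto.const_mul p)
      simpa [Function.comp, Real.zero_rpow (by linarith : p - 2 ≠ 0)] using h2
    exact squeeze_zero_norm hbound htend
  · have hev : (fun y : ℝ => p * y * |y| ^ (p - 2)) =ᶠ[nhds x]
        fun y => p * y ^ (p - 1) := by
      filter_upwards [eventually_gt_nhds hx] with y hy
      rw [abs_of_pos hy, show p - 1 = 1 + (p - 2) by ring,
        Real.rpow_add hy, Real.rpow_one]
      ring
    have h1 : HasDerivAt (fun y : ℝ => p * y ^ (p - 1))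
        (p * ((p - 1) * x ^ (p - 1 - 1))) x :=
      (Real.hasDerivAt_rpow_const (p := p - 1) (Or.inl hx.ne')).const_mul p
    have heq : p * ((p - 1) * x ^ (p - 1 - 1)) = p * (p - 1) * |x| ^ (p - 2) := by
      rw [abs_of_pos hx, show p - 1 - 1 = p - 2 by ring]; ring
    exact (heq ▸ h1).congr_of_eventuallyEq hev

private lemma contDiff_abs_rpow (hp : 2 ≤ p) :
    ContDiff ℝ 2 (fun x : ℝ => |x| ^ p) := by
  rcases eq_or_lt_of_le hp with rfl | hp2
  · have : (fun x : ℝ => |x| ^ (2:ℝ)) = fun x : ℝ => x ^ 2 := by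
      funext x
      rw [show ((2:ℝ)) = ((2:ℕ):ℝ) by norm_num, Real.rpow_natCast, sq_abs]
    rw [this]
    exact contDiff_id.pow 2
  · have hp1 : 1 < p := by linarith
    have hdf : deriv (fun x : ℝ => |x| ^ p) = fun x => p * x * |x| ^ (p - 2) :=
      funext fun x => (bellAux_hasDerivAt_abs_rpow hp1 x).deriv
    have hdg : deriv (fun x : ℝ => p * x * |x| ^ (p - 2)) =
        fun x => p * (p - 1) * |x| ^ (p - 2) :=
      funext fun x => (bellAux_hasDerivAt_abs_rpow' hp2 x).deriv
    have hC : Continuous (fun x : ℝ => p * (p - 1) * |x| ^ (p - 2)) :=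
      continuous_const.mul (continuous_abs.rpow_const fun x => Or.inr (by linarith))
    rw [show (2 : WithTop ℕ∞) = 1 + 1 from rfl, contDiff_succ_iff_deriv]
    refine ⟨fun x => (bellAux_hasDerivAt_abs_rpow hp1 x).differentiableAt, by simp, ?_⟩
    rw [hdf, contDiff_one_iff_deriv]
    exact ⟨fun x => (bellAux_hasDerivAt_abs_rpow' hp2 x).differentiableAt, hdg ▸ hC⟩

end aux

/-- The Nazarov–Treil Bellman auxiliary function `β`. -/
noncomputable def bell (p : ℝ) (u v : ℝ) : ℝ :=
  if u ^ p ≤ v ^ (p / (p - 1)) then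
    u ^ p + v ^ (p / (p - 1)) +
      (p / (p - 1)) * (p / (p - 1) - 1) / 8 * (u ^ (2 : ℝ) * v ^ (2 - p / (p - 1)))
  else
    u ^ p + v ^ (p / (p - 1)) +
      (p / (p - 1)) * (p / (p - 1) - 1) / 8 *
        ((2 / p) * u ^ p + (2 / (p / (p - 1)) - 1) * v ^ (p / (p - 1)))

/-- The Nazarov–Treil Bellman function `Q(ζ,η) = (1/2) β(|ζ|,|η|)` on `ℝ × ℝⁿ`. -/
noncomputable def bellQ (p : ℝ) (n : ℕ) (ξ : ℝ × EuclideanSpace ℝ (Fin n)) : ℝ :=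
  (1 / 2) * bell p |ξ.1| ‖ξ.2‖

/-- For `p ≥ 2`, `q = p/(p-1)`, the Nazarov–Treil Bellman function `Q`
is of class `C²` on the open set `{(ζ,η) : η ≠ 0 ∧ |ζ|^p ≠ |η|^q}`. -/
theorem bellQ_contDiffOn_two (p q : ℝ) (hp : 2 ≤ p) (hq : q = p / (p - 1)) (n : ℕ) :
    ContDiffOn ℝ 2 (bellQ p n)
      {ξ : ℝ × EuclideanSpace ℝ (Fin n) | ξ.2 ≠ 0 ∧ |ξ.1| ^ p ≠ ‖ξ.2‖ ^ q} := by
  subst hq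
  set q : ℝ := p / (p - 1) with hq
  have hp0 : (0:ℝ) < p := by linarith
  have hpm1 : (0:ℝ) < p - 1 := by linarith
  have hq0 : 0 < q := div_pos hp0 hpm1
  -- continuity facts for openness of the branch regions
  have c1 : Continuous fun ξ : ℝ × EuclideanSpace ℝ (Fin n) => |ξ.1| ^ p :=
    (continuous_abs.comp continuous_fst).rpow_const fun _ => Or.inr hp0.le
  have c2 : Continuous fun ξ : ℝ × EuclideanSpace ℝ (Fin n) => ‖ξ.2‖ ^ q :=
    (continuous_norm.comp continuous_snd).rpow_const fun _ => Or.inr hq0.le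
  -- C² of the |ζ|^p term, globally
  have hA : ContDiff ℝ 2 fun ξ : ℝ × EuclideanSpace ℝ (Fin n) => |ξ.1| ^ p :=
    (contDiff_abs_rpow hp).comp contDiff_fst
  -- C² of the ζ² term, globally
  have hC : ContDiff ℝ 2 fun ξ : ℝ × EuclideanSpace ℝ (Fin n) => |ξ.1| ^ (2:ℝ) := by
    have : (fun ξ : ℝ × EuclideanSpace ℝ (Fin n) => |ξ.1| ^ (2:ℝ)) =
        fun ξ => ξ.1 ^ 2 := by
      funext ξ
      rw [show ((2:ℝ)) = ((2:ℕ):ℝ) by norm_num, Real.rpow_natCast, sq_abs]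
    rw [this]
    exact contDiff_fst.pow 2
  intro ξ hξ
  obtain ⟨hη, hne⟩ := hξ
  have hnorm : ‖ξ.2‖ ≠ 0 := norm_ne_zero_iff.2 hη
  -- C²-at of norm powers
  have hB : ∀ r : ℝ, ContDiffAt ℝ 2 (fun ξ' : ℝ × EuclideanSpace ℝ (Fin n) => ‖ξ'.2‖ ^ r) ξ :=
    fun r => (contDiffAt_snd.norm ℝ hη).rpow_const_of_ne hnorm
  apply ContDiffAt.contDiffWithinAt
  rcases hne.lt_or_gt with h | h
  · -- branch 1 : |ζ|^p < ‖η‖^q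
    have hU : ∀ᶠ ξ' in nhds ξ, |ξ'.1| ^ p < ‖ξ'.2‖ ^ q :=
      (isOpen_lt c1 c2).eventually_mem h |>.mono fun ξ' h' => h'
    have hev : bellQ p n =ᶠ[nhds ξ]
        fun ξ' => (1/2) * (|ξ'.1| ^ p + ‖ξ'.2‖ ^ q +
          q * (q - 1) / 8 * (|ξ'.1| ^ (2:ℝ) * ‖ξ'.2‖ ^ (2 - q))) := by
      filter_upwards [hU] with ξ' h'
      simp only [bellQ, bell, ← hq, if_pos h'.le]
    refine ContDiffAt.congr_of_eventuallyEq ?_ hev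
    exact contDiffAt_const.mul (((hA.contDiffAt.add (hB q)).add
      (contDiffAt_const.mul (hC.contDiffAt.mul (hB (2 - q))))))
  · -- branch 2 : ‖η‖^q < |ζ|^p
    have hU : ∀ᶠ ξ' in nhds ξ, ‖ξ'.2‖ ^ q < |ξ'.1| ^ p :=
      (isOpen_lt c2 c1).eventually_mem h |>.mono fun ξ' h' => h'
    have hev : bellQ p n =ᶠ[nhds ξ]
        fun ξ' => (1/2) * (|ξ'.1| ^ p + ‖ξ'.2‖ ^ q +
          q * (q - 1) / 8 * ((2 / p) * |ξ'.1| ^ p + (2 / q - 1) * ‖ξ'.2‖ ^ q)) := by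
      filter_upwards [hU] with ξ' h'
      simp only [bellQ, bell, ← hq, if_neg (not_le.2 h')]
    refine ContDiffAt.congr_of_eventuallyEq ?_ hev
    exact contDiffAt_const.mul (((hA.contDiffAt.add (hB q)).add
      (contDiffAt_const.mul ((contDiffAt_const.mul hA.contDiffAt).add
        (contDiffAt_const.mul (hB q))))))
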